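/- Let R be a finite group with right-regular representation R_r ≤ Sym(R). Suppose that for every π ∈ Sym(R), the subgroups R_r and R_r^π = π^{-1}R_rπ are conjugate within the 2-closure ⟨R_r, R_r^π⟩^(2). Then every Cayley colour digraph on R has the CI property: whenever two Cayley colour digraphs on R are isomorphic, they are isomorphic via a group automorphism of R. -/

import Mathlib

/-- The right-regular representation of R in Sym(R): g acts by right
multiplication (as a homomorphism, g ↦ (x ↦ x * g⁻¹)); its range is the
right-regular subgroup R_r of Sym(R). -/
def rightRegularHom (R : Type*) [Group R] : R →* Equiv.Perm R where
  toFun g := Equiv.mulRight g⁻¹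
  map_one' := by ext x; simp
  map_mul' a b := by ext x; simp [mul_assoc]

/-- The 2-closure of a permutation group, as a set of permutations agreeing
with some group element on every ordered pair. -/
def twoClosure {Ω : Type*} (G : Subgroup (Equiv.Perm Ω)) : Set (Equiv.Perm Ω) :=
  {β | ∀ x y : Ω, ∃ g ∈ G, β x = g x ∧ β y = g y}

/-- Auxiliary: the automorphism group of the Cayley colour digraph with
connection sets `Tc`. -/
def arcAut {R : Type*} [Group R] {Colour : Type*} (Tc : Colour → Set R) :
    Subgroup (Equiv.Perm R) where
  carrier := {g | ∀ (c : Colour) (a b : R),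
    (∃ t ∈ Tc c, b = t * a) ↔ (∃ t ∈ Tc c, g b = t * g a)}
  one_mem' := by intro c a b; simp
  mul_mem' := by
    intro x y hx hy c a b
    exact (hy c a b).trans (hx c (y a) (y b))
  inv_mem' := by
    intro x hx c a b
    have h := (hx c (x⁻¹ a) (x⁻¹ b)).symm
    simpa using h

lemma mem_arcAut {R : Type*} [Group R] {Colour : Type*} {Tc : Colour → Set R}
    {g : Equiv.Perm R} : g ∈ arcAut Tc ↔ ∀ (c : Colour) (a b : R),
    (∃ t ∈ Tc c, b = t * a) ↔ (∃ t ∈ Tc c, g b = t * g a) := Iff.rfl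

lemma arc_mulRight {R : Type*} [Group R] (W : Set R) (x y r : R) :
    (∃ t ∈ W, y * r = t * (x * r)) ↔ (∃ t ∈ W, y = t * x) := by
  simp only [← mul_assoc, mul_left_inj]

/-- Babai-type criterion: if for every π ∈ Sym(R) the groups R_r and
R_r^π = π⁻¹R_rπ are conjugate within the 2-closure of ⟨R_r, R_r^π⟩, then R is
a CI^(2) group: any two isomorphic Cayley colour digraphs on R are isomorphic
via a group automorphism of R. -/
theorem stmt_19 (R : Type*) [Group R] [Fintype R]
    (hyp : ∀ π : Equiv.Perm R,
      ∃ δ ∈ twoClosure ((rightRegularHom R).range ⊔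
          Subgroup.comap (MulAut.conj π).toMonoidHom (rightRegularHom R).range),
        ∀ g : Equiv.Perm R,
          g ∈ Subgroup.comap (MulAut.conj π).toMonoidHom (rightRegularHom R).range ↔
            δ⁻¹ * g * δ ∈ (rightRegularHom R).range) :
    ∀ (Colour : Type*) (Sc Tc : Colour → Set R),
      (∃ e : R ≃ R, ∀ (c : Colour) (a b : R),
        (∃ s ∈ Sc c, b = s * a) ↔ (∃ t ∈ Tc c, e b = t * e a)) →
      ∃ δ : R ≃* R, ∀ c : Colour, (fun x => δ x) '' Sc c = Tc c := by
  intro Colour Sc Tc ⟨e, he⟩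
  obtain ⟨δ, hδ2, hδconj⟩ := hyp e.symm
  -- right-regular elements preserve the Tc-arcs
  have hRr : (rightRegularHom R).range ≤ arcAut Tc := by
    rintro g ⟨r, rfl⟩
    rw [mem_arcAut]
    intro c a b
    have : ∀ x : R, (rightRegularHom R r) x = x * r⁻¹ := fun x => rfl
    rw [this, this]
    exact (arc_mulRight (Tc c) a b r⁻¹).symm
  -- the Tc-arc relation transported through e.symm
  have hTe : ∀ (c : Colour) (x y : R),
      (∃ t ∈ Tc c, y = t * x) ↔ (∃ s ∈ Sc c, e.symm y = s * e.symm x) := by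
    intro c x y
    have h := (he c (e.symm x) (e.symm y)).symm
    simpa using h
  -- the conjugated regular group preserves the Tc-arcs
  have hcomap : Subgroup.comap (MulAut.conj e.symm).toMonoidHom (rightRegularHom R).range
      ≤ arcAut Tc := by
    intro g hg
    rw [Subgroup.mem_comap] at hg
    obtain ⟨r, hr⟩ := hg
    have h1 : ∀ y : R, y * r⁻¹ = e.symm (g (e y)) := by
      intro y
      have := congrArg (fun p : Equiv.Perm R => p y) hr
      simpa [MulAut.conj_apply, Equiv.Perm.mul_apply, rightRegularHom] using this
    have hgx : ∀ x : R, g x = e (e.symm x * r⁻¹) := by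
      intro x
      have := h1 (e.symm x)
      rw [this]
      simp
    rw [mem_arcAut]
    intro c a b
    calc (∃ t ∈ Tc c, b = t * a)
        ↔ (∃ s ∈ Sc c, e.symm b = s * e.symm a) := hTe c a b
      _ ↔ (∃ s ∈ Sc c, e.symm b * r⁻¹ = s * (e.symm a * r⁻¹)) :=
          (arc_mulRight (Sc c) (e.symm a) (e.symm b) r⁻¹).symm
      _ ↔ (∃ t ∈ Tc c, e (e.symm b * r⁻¹) = t * e (e.symm a * r⁻¹)) :=
          he c (e.symm a * r⁻¹) (e.symm b * r⁻¹)
      _ ↔ (∃ t ∈ Tc c, g b = t * g a) := by rw [hgx a, hgx b]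
  have hG : (rightRegularHom R).range ⊔
      Subgroup.comap (MulAut.conj e.symm).toMonoidHom (rightRegularHom R).range
      ≤ arcAut Tc := sup_le hRr hcomap
  -- δ itself preserves Tc-arcs
  have hδA : δ ∈ arcAut Tc := by
    rw [mem_arcAut]
    intro c a b
    obtain ⟨g, hgG, hga, hgb⟩ := hδ2 a b
    rw [hga, hgb]
    exact (hG hgG) c a b
  have hδinv := (arcAut Tc).inv_mem hδA
  -- φ normalizes the right-regular group
  set φ : Equiv.Perm R := δ⁻¹ * e.symm⁻¹ with hφdef
  have hnorm : ∀ r : R, ∃ u : R,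
      rightRegularHom R u = φ * rightRegularHom R r * φ⁻¹ := by
    intro r
    have hmem : e.symm⁻¹ * rightRegularHom R r * e.symm ∈
        Subgroup.comap (MulAut.conj e.symm).toMonoidHom (rightRegularHom R).range := by
      rw [Subgroup.mem_comap]
      refine ⟨r, ?_⟩
      simp [MulAut.conj_apply]
      group
    have := (hδconj _).mp hmem
    obtain ⟨u, hu⟩ := this
    refine ⟨u, ?_⟩
    rw [hu, hφdef]
    group
  have hφmul : ∀ x y : R, φ (x * y) = φ x * (φ 1)⁻¹ * φ y := by
    have h1 : ∀ y : R, ∀ z : R, φ (z * y) = φ z * (φ 1)⁻¹ * φ y := by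
      intro y z
      obtain ⟨u, hu⟩ := hnorm y⁻¹
      have key : ∀ w : R, φ (w * y) = φ w * u⁻¹ := by
        intro w
        have := congrArg (fun p : Equiv.Perm R => p (φ w)) hu
        simp only [Equiv.Perm.mul_apply, Equiv.Perm.inv_def, Equiv.symm_apply_apply] at this
        have hrr : ∀ v : R, (rightRegularHom R u) v = v * u⁻¹ := fun v => rfl
        have hrr' : (rightRegularHom R y⁻¹) w = w * y := by
          show w * y⁻¹⁻¹ = w * y
          rw [inv_inv]
        rw [hrr, hrr'] at this
        exact this.symm
      have k1 := key z
      have k2 := key 1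
      rw [one_mul] at k2
      rw [k1, k2]
      group
    exact fun x y => h1 y x
  -- build the group automorphism
  set E : R ≃ R := φ.trans (Equiv.mulRight (φ 1)⁻¹) with hEdef
  have hEx : ∀ x : R, E x = φ x * (φ 1)⁻¹ := fun x => rfl
  have hE1 : E 1 = 1 := by rw [hEx]; group
  -- E is an isomorphism from the Sc-digraph to the Tc-digraph
  have hφx : ∀ x : R, φ x = δ⁻¹ (e x) := by
    intro x
    rw [hφdef]
    simp [Equiv.Perm.inv_def]
  have hEarc : ∀ (c : Colour) (a b : R),
      (∃ s ∈ Sc c, b = s * a) ↔ (∃ t ∈ Tc c, E b = t * E a) := by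
    intro c a b
    calc (∃ s ∈ Sc c, b = s * a)
        ↔ (∃ t ∈ Tc c, e b = t * e a) := he c a b
      _ ↔ (∃ t ∈ Tc c, δ⁻¹ (e b) = t * δ⁻¹ (e a)) := hδinv c (e a) (e b)
      _ ↔ (∃ t ∈ Tc c, δ⁻¹ (e b) * (φ 1)⁻¹ = t * (δ⁻¹ (e a) * (φ 1)⁻¹)) :=
          (arc_mulRight (Tc c) (δ⁻¹ (e a)) (δ⁻¹ (e b)) (φ 1)⁻¹).symm
      _ ↔ (∃ t ∈ Tc c, E b = t * E a) := by rw [hEx a, hEx b, hφx a, hφx b]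
  refine ⟨{ toEquiv := E, map_mul' := ?_ }, ?_⟩
  · intro x y
    show E (x * y) = E x * E y
    rw [hEx, hEx, hEx, hφmul]
    group
  · intro c
    ext t
    simp only [Set.mem_image]
    constructor
    · rintro ⟨s, hs, rfl⟩
      obtain ⟨t', ht', hh⟩ := (hEarc c 1 s).mp ⟨s, hs, (mul_one s).symm⟩
      rw [hE1, mul_one] at hh
      show E s ∈ Tc c
      rw [hh]
      exact ht'
    · intro ht
      obtain ⟨s, hs, hh⟩ := (hEarc c 1 (E.symm t)).mpr
        ⟨t, ht, by rw [E.apply_symm_apply, hE1, mul_one]⟩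
      refine ⟨E.symm t, ?_, E.apply_symm_apply t⟩
      rw [hh, mul_one] at *
      rwa [← hh] at hs
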